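/- For every ℓ ≥ 1, n ≥ ℓ, and every a ∈ {0,1,...,n}, the code C(n,ℓ,a) = { x ∈ {0,1}^n : ∑_{i=1}^{n} i·(Tr(x)_i mod 2) ≡ a (mod n+1) } is a single-deletion ℓ-read code: for all distinct x, y ∈ C(n,ℓ,a), D(Tr(x)) ∩ D(Tr(y)) = ∅. -/

import Mathlib

/-- The ℓ-read vector of a binary vector `x` (as a list of Booleans): its entry at 0-based
index `i` (1-indexed `i+1`) is the Hamming weight of the window of `ℓ` consecutive
coordinates of `x` ending at 1-indexed position `i+1`, with out-of-range coordinates taken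
to be `0` (`false`). -/
def readVec (ℓ : ℕ) (x : List Bool) : List ℕ :=
  (List.range (x.length + ℓ - 1)).map fun i =>
    (((List.replicate (ℓ - 1) false ++ x ++ List.replicate (ℓ - 1) false).drop i).take ℓ).count true

/-- The single-deletion ball: all vectors obtained from `u` by deleting exactly one symbol. -/
def delBall {α : Type*} (u : List α) : Set (List α) :=
  { v | ∃ i < u.length, v = u.eraseIdx i }

/-- The code `C(n, ℓ, a)`: all `x ∈ {0,1}ⁿ` such that
`∑_{i=1}^{n} i·(Tr(x)_i mod 2) ≡ a (mod n+1)` (a Varshamov–Tenengolts-type constraint on the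
first `n` entries of the `ℓ`-read vector taken modulo 2). -/
def codeC (n ℓ a : ℕ) : Set (List Bool) :=
  { x | x.length = n ∧
    (∑ i ∈ Finset.range n, (i + 1) * ((readVec ℓ x).getD i 0 % 2)) % (n + 1) = a }

-- prefix count
def cntAux (x : List Bool) (k : ℕ) : ℕ := (x.take k).count true

lemma cnt_pad (ℓ : ℕ) (x : List Bool) (k : ℕ) :
    (((List.replicate (ℓ - 1) false ++ x ++ List.replicate (ℓ - 1) false)).take k).count true
      = cntAux x (k - (ℓ - 1)) := by
  rw [List.append_assoc, List.take_append, List.take_append]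
  simp [cntAux, List.take_replicate, List.count_replicate]

lemma readVec_length (ℓ : ℕ) (x : List Bool) : (readVec ℓ x).length = x.length + ℓ - 1 := by
  simp [readVec]

lemma readVec_getD (ℓ : ℕ) (hℓ : 1 ≤ ℓ) (x : List Bool) (i : ℕ) :
    (readVec ℓ x).getD i 0 + cntAux x (i + 1 - ℓ) = cntAux x (i + 1) := by
  by_cases hi : i < x.length + ℓ - 1
  · have hget : (readVec ℓ x).getD i 0 =
        (((List.replicate (ℓ - 1) false ++ x ++ List.replicate (ℓ - 1) false).drop i).take ℓ).count true := by
      rw [List.getD_eq_getElem?_getD, readVec]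
      rw [List.getElem?_map, List.getElem?_range hi]
      rfl
    rw [hget]
    have htake : (List.replicate (ℓ - 1) false ++ x ++ List.replicate (ℓ - 1) false).take (i + ℓ) = (List.replicate (ℓ - 1) false ++ x ++ List.replicate (ℓ - 1) false).take i ++ ((List.replicate (ℓ - 1) false ++ x ++ List.replicate (ℓ - 1) false).drop i).take ℓ := List.take_add
    have hcnt := congrArg (List.count true) htake
    rw [List.count_append, cnt_pad, cnt_pad] at hcnt
    have e1 : i + ℓ - (ℓ - 1) = i + 1 := by omega
    have e2 : i - (ℓ - 1) = i + 1 - ℓ := by omega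
    rw [e1, e2] at hcnt
    omega
  · have hlen : (readVec ℓ x).length ≤ i := by rw [readVec_length]; omega
    rw [List.getD_eq_getElem?_getD, List.getElem?_eq_none hlen]
    have h1 : x.take (i + 1 - ℓ) = x := List.take_of_length_le (by omega)
    have h2 : x.take (i + 1) = x := List.take_of_length_le (by omega)
    simp [cntAux, h1, h2]

lemma cnt_succ (x : List Bool) (i : ℕ) (h : i < x.length) :
    cntAux x (i + 1) = cntAux x i + (if x[i] = true then 1 else 0) := by
  have : x.take (i+1) = x.take i ++ [x[i]] := by
    rw [List.take_succ, List.getElem?_eq_getElem h]; rfl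
  rw [cntAux, this, List.count_append, cntAux]
  by_cases hx : x[i] = true <;> simp [hx]

lemma parity_inj (ℓ : ℕ) (hℓ : 1 ≤ ℓ) (x y : List Bool) (hlen : x.length = y.length)
    (h : ∀ i < x.length, (readVec ℓ x).getD i 0 % 2 = (readVec ℓ y).getD i 0 % 2) :
    x = y := by
  have key : ∀ i, i ≤ x.length → x.take i = y.take i := by
    intro i
    induction i with
    | zero => simp
    | succ i ih =>
      intro hi
      have hix : i < x.length := hi
      have hiy : i < y.length := hlen ▸ hix
      have ht := ih (le_of_lt hix)
      have hc1 : cntAux x i = cntAux y i := by unfold cntAux; rw [ht]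
      have hc2 : cntAux x (i + 1 - ℓ) = cntAux y (i + 1 - ℓ) := by
        have hx2 : x.take (i + 1 - ℓ) = (x.take i).take (i + 1 - ℓ) := by
          rw [List.take_take]; congr 1; omega
        have hy2 : y.take (i + 1 - ℓ) = (y.take i).take (i + 1 - ℓ) := by
          rw [List.take_take]; congr 1; omega
        unfold cntAux; rw [hx2, hy2, ht]
      have e1 := readVec_getD ℓ hℓ x i
      have e2 := readVec_getD ℓ hℓ y i
      have hp := h i hix
      have hsx := cnt_succ x i hix
      have hsy := cnt_succ y i hiy
      have hxy : x[i] = y[i] := by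
        by_cases hb1 : x[i] = true <;> by_cases hb2 : y[i] = true <;>
          simp [hb1, hb2] at hsx hsy ⊢ <;> omega
      have hx3 : x.take (i+1) = x.take i ++ [x[i]] := by
        rw [List.take_succ, List.getElem?_eq_getElem hix]; rfl
      have hy3 : y.take (i+1) = y.take i ++ [y[i]] := by
        rw [List.take_succ, List.getElem?_eq_getElem hiy]; rfl
      rw [hx3, hy3, ht, hxy]
  have := key x.length le_rfl
  rwa [List.take_length, hlen, List.take_length] at this

-- telescoping
lemma tele (f : ℕ → ℤ) (I T : ℕ) (hIT : I < T) :
    ∑ i ∈ Finset.Ico I T, ((i : ℤ) + 1) * (f i - f (i + 1))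
      = ((I : ℤ) + 1) * f I + (∑ j ∈ Finset.Ico (I + 1) T, f j) - (T : ℤ) * f T := by
  induction T, hIT using Nat.le_induction with
  | base =>
    rw [Finset.sum_Ico_succ_top (le_refl I), Finset.Ico_self, Finset.sum_empty,
        Finset.Ico_self, Finset.sum_empty]
    push_cast; ring
  | succ T hT ih =>
    rw [Finset.sum_Ico_succ_top (by omega), ih, Finset.sum_Ico_succ_top (by omega)]
    push_cast; ring

lemma key_arith (n I J : ℕ) (BX BY : ℕ → ℤ)
    (hBX : ∀ k, BX k = 0 ∨ BX k = 1) (hBY : ∀ k, BY k = 0 ∨ BY k = 1)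
    (hIJ : I ≤ J)
    (hlt : ∀ k, k < I → BX k = BY k)
    (hmid : ∀ k, I ≤ k → k < J → BY k = BX (k + 1))
    (hgt : ∀ k, J < k → BX k = BY k)
    (hdvd : ((n : ℤ) + 1) ∣ ∑ i ∈ Finset.range n, ((i : ℤ) + 1) * (BX i - BY i)) :
    ∀ k, k < n → BX k = BY k := by
  by_cases hIn : n ≤ I
  · intro k hk; exact hlt k (by omega)
  push_neg at hIn
  set T := min (J + 1) n with hTdef
  have hIT : I < T := by omega
  have hTn : T ≤ n := by omega
  set E : ℤ := if J < n then BY J else BX n with hEdef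
  have hE01 : E = 0 ∨ E = 1 := by
    rw [hEdef]; split
    · exact hBY J
    · exact hBX n
  set G : ℕ → ℤ := fun k => if T ≤ k then E else BX k with hGdef
  -- step 1 : restrict the sum
  have step1 : ∑ i ∈ Finset.range n, ((i : ℤ) + 1) * (BX i - BY i)
      = ∑ i ∈ Finset.Ico I T, ((i : ℤ) + 1) * (BX i - BY i) := by
    rw [Finset.range_eq_Ico]
    refine (Finset.sum_subset ?_ ?_).symm
    · intro i hi; simp only [Finset.mem_Ico] at *; omega
    · intro i hi hni
      simp only [Finset.mem_Ico] at hi hni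
      rcases Nat.lt_or_ge i I with h | h
      · rw [hlt i h]; ring
      · have hiT : T ≤ i := by omega
        have : J < i := by omega
        rw [hgt i this]; ring
  -- step 2 : replace by G
  have step2 : ∑ i ∈ Finset.Ico I T, ((i : ℤ) + 1) * (BX i - BY i)
      = ∑ i ∈ Finset.Ico I T, ((i : ℤ) + 1) * (G i - G (i + 1)) := by
    refine Finset.sum_congr rfl ?_
    intro i hi
    simp only [Finset.mem_Ico] at hi
    have hGi : G i = BX i := by rw [hGdef]; simp only; rw [if_neg (by omega)]
    have hGsi : G (i + 1) = BY i := by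
      rw [hGdef]; simp only
      by_cases hc : T ≤ i + 1
      · rw [if_pos hc]
        -- i + 1 = T
        have hiT : i + 1 = T := by omega
        rcases Nat.lt_or_ge i J with hiJ | hiJ
        · -- then T ≤ J, so T = n and ¬ J < n
          have hJn : ¬ J < n := by omega
          rw [hEdef, if_neg hJn]
          have : n = i + 1 := by omega
          rw [this, hmid i (by omega) hiJ]
        · -- i = J, and J < n
          have hiJ' : i = J := by omega
          have hJn : J < n := by omega
          rw [hEdef, if_pos hJn, hiJ']
      · rw [if_neg hc]
        exact (hmid i (by omega) (by omega)).symm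
    rw [hGi, hGsi]
  have hGI : G I = BX I := by rw [hGdef]; simp only; rw [if_neg (by omega)]
  have hGT : G T = E := by rw [hGdef]; simp only; rw [if_pos (le_refl T)]
  have hS : ∑ j ∈ Finset.Ico (I + 1) T, G j = ∑ j ∈ Finset.Ico (I + 1) T, BX j := by
    refine Finset.sum_congr rfl ?_
    intro j hj
    simp only [Finset.mem_Ico] at hj
    rw [hGdef]; simp only; rw [if_neg (by omega)]
  have step3 : ∑ i ∈ Finset.range n, ((i : ℤ) + 1) * (BX i - BY i)
      = ((I : ℤ) + 1) * BX I + (∑ j ∈ Finset.Ico (I + 1) T, BX j) - (T : ℤ) * E := by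
    rw [step1, step2, tele G I T hIT, hGI, hGT, hS]
  -- bounds on the partial sum
  set S : ℤ := ∑ j ∈ Finset.Ico (I + 1) T, BX j with hSdef
  have hS0 : 0 ≤ S := Finset.sum_nonneg (fun j _ => by rcases hBX j with h | h <;> omega)
  have hIT' : ((I : ℤ) + 1) ≤ (T : ℤ) := by exact_mod_cast hIT
  have hTn' : (T : ℤ) ≤ (n : ℤ) := by exact_mod_cast hTn
  have hInn : (0 : ℤ) ≤ (I : ℤ) := Int.natCast_nonneg I
  have hScard : S ≤ (T : ℤ) - ((I : ℤ) + 1) := by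
    calc S ≤ ∑ j ∈ Finset.Ico (I + 1) T, (1 : ℤ) :=
          Finset.sum_le_sum (fun j _ => by rcases hBX j with h | h <;> omega)
    _ = (T : ℤ) - ((I : ℤ) + 1) := by
          rw [Finset.sum_const, Nat.card_Ico, nsmul_eq_mul, mul_one,
            Nat.cast_sub (by omega : I + 1 ≤ T)]
          push_cast; ring
  have hBXI0 : (0 : ℤ) ≤ BX I := by rcases hBX I with h | h <;> rw [h] <;> norm_num
  have hBXI1 : BX I ≤ 1 := by rcases hBX I with h | h <;> rw [h] <;> norm_num
  have hE0 : (0 : ℤ) ≤ E := by rcases hE01 with h | h <;> rw [h] <;> norm_num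
  have hE1 : E ≤ 1 := by rcases hE01 with h | h <;> rw [h] <;> norm_num
  -- total is zero
  have hzero : ((I : ℤ) + 1) * BX I + S - (T : ℤ) * E = 0 := by
    rw [step3] at hdvd
    rcases hdvd with ⟨c, hc⟩
    have m1 : ((I : ℤ) + 1) * BX I ≤ (I : ℤ) + 1 :=
      mul_le_of_le_one_right (by linarith) hBXI1
    have m2 : (0 : ℤ) ≤ (T : ℤ) * E := mul_nonneg (by linarith) hE0
    have m3 : (0 : ℤ) ≤ ((I : ℤ) + 1) * BX I := mul_nonneg (by linarith) hBXI0
    have m4 : (T : ℤ) * E ≤ (T : ℤ) := mul_le_of_le_one_right (by linarith) hE1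
    rcases lt_trichotomy c 0 with hc0 | hc0 | hc0
    · have : ((n : ℤ) + 1) * c ≤ ((n : ℤ) + 1) * (-1) :=
        mul_le_mul_of_nonneg_left (by omega) (by positivity)
      linarith [hc ▸ this]
    · rw [hc0, mul_zero] at hc; exact hc
    · have : ((n : ℤ) + 1) * 1 ≤ ((n : ℤ) + 1) * c :=
        mul_le_mul_of_nonneg_left (by omega) (by positivity)
      linarith [hc ▸ this]
  -- deduce values
  have hval : ∀ k, I ≤ k → k < T → BX k = E := by
    have hIS : BX I = E ∧ S = ((T : ℤ) - ((I : ℤ) + 1)) * E := by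
      rcases hE01 with hE | hE
      · rw [hE] at hzero ⊢
        rw [mul_zero, sub_zero] at hzero
        rw [mul_zero]
        rcases hBX I with h | h
        · rw [h, mul_zero, zero_add] at hzero; exact ⟨h, hzero⟩
        · exfalso; rw [h, mul_one] at hzero; linarith
      · rw [hE] at hzero ⊢
        rw [mul_one] at hzero ⊢
        rcases hBX I with h | h
        · exfalso; rw [h, mul_zero, zero_add] at hzero; linarith
        · rw [h, mul_one] at hzero; exact ⟨h, by linarith⟩
    obtain ⟨hI1, hS1⟩ := hIS
    have hall : ∀ j ∈ Finset.Ico (I + 1) T, BX j = E := by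
      rcases hE01 with hE | hE
      · rw [hE] at hS1
        rw [mul_zero] at hS1
        intro j hj
        rw [hE]
        have hsum : ∑ j ∈ Finset.Ico (I + 1) T, BX j = 0 := by rw [← hSdef]; exact hS1
        exact (Finset.sum_eq_zero_iff_of_nonneg
          (fun j _ => by rcases hBX j with h | h <;> rw [h] <;> norm_num)).mp hsum j hj
      · rw [hE] at hS1
        rw [mul_one] at hS1
        have hsum : ∑ j ∈ Finset.Ico (I + 1) T, ((1 : ℤ) - BX j) = 0 := by
          rw [Finset.sum_sub_distrib, Finset.sum_const, Nat.card_Ico, nsmul_eq_mul,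
            mul_one, Nat.cast_sub (by omega : I + 1 ≤ T), ← hSdef, hS1]
          push_cast; ring
        intro j hj
        rw [hE]
        have := (Finset.sum_eq_zero_iff_of_nonneg
          (fun j _ => by rcases hBX j with h | h <;> rw [h] <;> norm_num)).mp hsum j hj
        linarith
    intro k hk1 hk2
    rcases eq_or_lt_of_le hk1 with h | h
    · rw [← h]; exact hI1
    · exact hall k (Finset.mem_Ico.mpr ⟨by omega, hk2⟩)
  -- auxiliary : BX n = E when ¬ J < n
  intro k hk
  rcases Nat.lt_or_ge k I with h | h
  · exact hlt k h
  rcases lt_trichotomy k J with h1 | h1 | h1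
  · have hkT : k < T := by omega
    have hA : BX k = E := hval k h hkT
    have hB : BX (k + 1) = E := by
      by_cases hc : k + 1 < T
      · exact hval (k + 1) (by omega) hc
      · have hkT' : k + 1 = T := by omega
        have hJn : ¬ J < n := by omega
        rw [hEdef, if_neg hJn]
        congr 1; omega
    rw [hmid k h h1, hA, hB]
  · have hJn : J < n := by omega
    have hA : BX k = E := hval k h (by omega)
    rw [hA, hEdef, if_pos hJn, h1]
  · exact hgt k h1

lemma main_case (ℓ n a : ℕ) (hℓ : 1 ≤ ℓ) (x y : List Bool)
    (hx : x ∈ codeC n ℓ a) (hy : y ∈ codeC n ℓ a) (I J : ℕ) (hIJ : I ≤ J)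
    (heq : (readVec ℓ x).eraseIdx I = (readVec ℓ y).eraseIdx J) : x = y := by
  obtain ⟨hxl, hxs⟩ := hx
  obtain ⟨hyl, hys⟩ := hy
  have hopt : ∀ k, (if k < I then (readVec ℓ x)[k]? else (readVec ℓ x)[k+1]?)
      = (if k < J then (readVec ℓ y)[k]? else (readVec ℓ y)[k+1]?) := by
    intro k
    rw [← List.getElem?_eraseIdx, ← List.getElem?_eraseIdx, heq]
  have hgetD : ∀ (u : List ℕ) (k : ℕ), u.getD k 0 = (u[k]?).getD 0 := fun u k =>
    List.getD_eq_getElem?_getD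
  have hlt : ∀ k, k < I → (readVec ℓ x).getD k 0 = (readVec ℓ y).getD k 0 := by
    intro k hk
    have h := hopt k
    rw [if_pos hk, if_pos (by omega)] at h
    rw [hgetD, hgetD, h]
  have hmid : ∀ k, I ≤ k → k < J → (readVec ℓ y).getD k 0 = (readVec ℓ x).getD (k+1) 0 := by
    intro k hk1 hk2
    have h := hopt k
    rw [if_neg (by omega), if_pos hk2] at h
    rw [hgetD, hgetD, ← h]
  have hgt : ∀ k, J < k → (readVec ℓ x).getD k 0 = (readVec ℓ y).getD k 0 := by
    intro k hk
    have h := hopt (k - 1)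
    rw [if_neg (by omega), if_neg (by omega)] at h
    have hk1 : k - 1 + 1 = k := by omega
    rw [hk1] at h
    rw [hgetD, hgetD, h]
  have hmod : (∑ i ∈ Finset.range n, (i + 1) * ((readVec ℓ x).getD i 0 % 2))
      ≡ (∑ i ∈ Finset.range n, (i + 1) * ((readVec ℓ y).getD i 0 % 2)) [MOD n + 1] :=
    hxs.trans hys.symm
  have hdvdZ := hmod.dvd
  have hdvd2 : ((n : ℤ) + 1) ∣ ∑ i ∈ Finset.range n, ((i : ℤ) + 1) *
      ((((readVec ℓ x).getD i 0 % 2 : ℕ) : ℤ) - (((readVec ℓ y).getD i 0 % 2 : ℕ) : ℤ)) := by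
    have hsum : ∑ i ∈ Finset.range n, ((i : ℤ) + 1) *
        ((((readVec ℓ x).getD i 0 % 2 : ℕ) : ℤ) - (((readVec ℓ y).getD i 0 % 2 : ℕ) : ℤ))
      = -((↑(∑ i ∈ Finset.range n, (i + 1) * ((readVec ℓ y).getD i 0 % 2)) : ℤ)
        - ↑(∑ i ∈ Finset.range n, (i + 1) * ((readVec ℓ x).getD i 0 % 2))) := by
      push_cast
      rw [neg_sub, ← Finset.sum_sub_distrib]
      exact Finset.sum_congr rfl fun i _ => by ring
    rw [hsum]
    have : ((n : ℤ) + 1) = ((n + 1 : ℕ) : ℤ) := by push_cast; ring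
    rw [this]
    exact dvd_neg.mpr hdvdZ
  have hBX : ∀ k, (((readVec ℓ x).getD k 0 % 2 : ℕ) : ℤ) = 0 ∨
      (((readVec ℓ x).getD k 0 % 2 : ℕ) : ℤ) = 1 := by
    intro k
    rcases Nat.mod_two_eq_zero_or_one ((readVec ℓ x).getD k 0) with h | h <;> rw [h] <;> simp
  have hBY : ∀ k, (((readVec ℓ y).getD k 0 % 2 : ℕ) : ℤ) = 0 ∨
      (((readVec ℓ y).getD k 0 % 2 : ℕ) : ℤ) = 1 := by
    intro k
    rcases Nat.mod_two_eq_zero_or_one ((readVec ℓ y).getD k 0) with h | h <;> rw [h] <;> simp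
  have hlt' : ∀ k, k < I → (((readVec ℓ x).getD k 0 % 2 : ℕ) : ℤ)
      = (((readVec ℓ y).getD k 0 % 2 : ℕ) : ℤ) := by
    intro k hk; rw [hlt k hk]
  have hmid' : ∀ k, I ≤ k → k < J → (((readVec ℓ y).getD k 0 % 2 : ℕ) : ℤ)
      = (((readVec ℓ x).getD (k + 1) 0 % 2 : ℕ) : ℤ) := by
    intro k hk1 hk2; rw [hmid k hk1 hk2]
  have hgt' : ∀ k, J < k → (((readVec ℓ x).getD k 0 % 2 : ℕ) : ℤ)
      = (((readVec ℓ y).getD k 0 % 2 : ℕ) : ℤ) := by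
    intro k hk; rw [hgt k hk]
  have hpar := key_arith n I J
    (fun k => (((readVec ℓ x).getD k 0 % 2 : ℕ) : ℤ))
    (fun k => (((readVec ℓ y).getD k 0 % 2 : ℕ) : ℤ))
    hBX hBY hIJ hlt' hmid' hgt' hdvd2
  refine parity_inj ℓ hℓ x y (by rw [hxl, hyl]) ?_
  intro i hi
  have h := hpar i (by rw [hxl] at hi; exact hi)
  exact_mod_cast h

/-- For every `ℓ ≥ 1`, `n ≥ ℓ`, and `a ∈ {0,1,…,n}`, the code
`C(n,ℓ,a)` is a single-deletion `ℓ`-read code: for all distinct `x, y ∈ C(n,ℓ,a)`,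
`D(Tr(x)) ∩ D(Tr(y)) = ∅`. -/
theorem codeC_is_single_deletion_read_code (ℓ n a : ℕ) (hℓ : 1 ≤ ℓ) (hn : ℓ ≤ n)
    (ha : a ≤ n) :
    ∀ x ∈ codeC n ℓ a, ∀ y ∈ codeC n ℓ a, x ≠ y →
      delBall (readVec ℓ x) ∩ delBall (readVec ℓ y) = ∅ := by
  intro x hx y hy hne
  rw [Set.eq_empty_iff_forall_notMem]
  rintro z ⟨⟨i, hi, hz1⟩, ⟨j, hj, hz2⟩⟩
  have heq : (readVec ℓ x).eraseIdx i = (readVec ℓ y).eraseIdx j := by rw [← hz1, ← hz2]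
  rcases le_total i j with h | h
  · exact hne (main_case ℓ n a hℓ x y hx hy i j h heq)
  · exact hne (main_case ℓ n a hℓ y x hy hx j i h heq.symm).symm
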